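/- arXiv:2205.03253 — 3 statements merged into one kernel-verified Lean document; each statement's English description precedes it below -/
import Mathlib

section
/- Let K be a finite simplicial complex, f an injective filtration function on K, and σ₁, σ₂ two distinct n-dimensional simplices of K. If for some ε > 0 we have f(σ₁) < f(σ₂) < f(σ₁) + 2ε, then there exists an injective filtration function g on K with ‖f − g‖_∞ ≤ ε and g(σ₂) < g(σ₁). -/
open scoped BigOperators

/-- A finite simplicial complex on vertex type `V`: a finite family of nonempty
finite vertex sets closed under passing to nonempty subsets. -/
structure SComplex (V : Type*) where
  faces : Finset (Finset V)
  nonempty_of_mem : ∀ s ∈ faces, s.Nonempty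
  down_closed : ∀ s ∈ faces, ∀ t ⊆ s, t.Nonempty → t ∈ faces

variable {V : Type*} [LinearOrder V]

/-- `f` is an injective filtration function on `K`: face-monotone and injective on faces. -/
def IsInjFiltration (K : SComplex V) (f : Finset V → ℝ) : Prop :=
  (∀ s ∈ K.faces, ∀ t ∈ K.faces, s ⊆ t → f s ≤ f t) ∧
  (∀ s ∈ K.faces, ∀ t ∈ K.faces, f s = f t → s = t)

/-- The sup-distance between `f` and `g` over the faces of `K` is at most `ε`. -/
def DistLE (K : SComplex V) (f g : Finset V → ℝ) (ε : ℝ) : Prop :=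
  ∀ s ∈ K.faces, |f s - g s| ≤ ε

/-- The sublevel subcomplex `K^f_r = f⁻¹((-∞, r])`. -/
noncomputable def sublevel (K : SComplex V) (f : Finset V → ℝ) (r : ℝ) : Finset (Finset V) :=
  K.faces.filter (fun s => f s ≤ r)

variable (𝔽 : Type*) [Field 𝔽]

/-- The simplicial boundary operator on chains (finitely supported functions on
simplices), with signs determined by the linear order on vertices. -/
noncomputable def bdry : (Finset V →₀ 𝔽) →ₗ[𝔽] (Finset V →₀ 𝔽) :=
  Finsupp.lsum 𝔽 (fun s => ∑ x ∈ s,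
    ((-1 : 𝔽) ^ (s.filter (fun y => y < x)).card) • Finsupp.lsingle (s.erase x))

/-- The submodule of `n`-chains supported on simplices of `L` (of cardinality `n+1`). -/
def chainsIn (L : Finset (Finset V)) (n : ℕ) : Submodule 𝔽 (Finset V →₀ 𝔽) where
  carrier := {c | ∀ s ∈ c.support, s ∈ L ∧ s.card = n + 1}
  add_mem' := by
    intro c d hc hd s hs
    rcases Finset.mem_union.mp (Finsupp.support_add hs) with h | h
    · exact hc s h
    · exact hd s h
  zero_mem' := by intro s hs; simp at hs
  smul_mem' := by
    intro a c hc s hs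
    exact hc s (Finsupp.support_smul hs)

/-- `n`-cycles supported in `L`. -/
noncomputable def cyclesIn (L : Finset (Finset V)) (n : ℕ) : Submodule 𝔽 (Finset V →₀ 𝔽) :=
  chainsIn 𝔽 L n ⊓ LinearMap.ker (bdry 𝔽)

/-- `n`-boundaries of `(n+1)`-chains supported in `L`. -/
noncomputable def boundariesIn (L : Finset (Finset V)) (n : ℕ) : Submodule 𝔽 (Finset V →₀ 𝔽) :=
  (chainsIn 𝔽 L (n + 1)).map (bdry 𝔽)

/-- `α` is an `n`-cycle in the subcomplex `L`. -/
def IsCycleIn (L : Finset (Finset V)) (n : ℕ) (α : Finset V →₀ 𝔽) : Prop :=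
  α ∈ cyclesIn 𝔽 L n

/-- The class of `α` is trivial in `H_n(L)`. -/
def TrivialIn (L : Finset (Finset V)) (n : ℕ) (α : Finset V →₀ 𝔽) : Prop :=
  α ∈ boundariesIn 𝔽 L n

/-- `α` and `β` are homologous in `L`. -/
def HomologousIn (L : Finset (Finset V)) (n : ℕ) (α β : Finset V →₀ 𝔽) : Prop :=
  α - β ∈ boundariesIn 𝔽 L n

/-- The homology class `[α] ∈ H_n(K^f_a)` is born at `a`: it is a nontrivial cycle
at level `a` and does not come from any strictly earlier level. -/
def BornAt (K : SComplex V) (f : Finset V → ℝ) (n : ℕ) (α : Finset V →₀ 𝔽) (a : ℝ) : Prop :=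
  IsCycleIn 𝔽 (sublevel K f a) n α ∧ ¬ TrivialIn 𝔽 (sublevel K f a) n α ∧
  ∀ q < a, ¬ ∃ β, IsCycleIn 𝔽 (sublevel K f q) n β ∧ HomologousIn 𝔽 (sublevel K f a) n α β

/-- The class `[α]` terminates at level `b` in the filtration `K^f`. -/
def TerminatesAt (K : SComplex V) (f : Finset V → ℝ) (n : ℕ) (α : Finset V →₀ 𝔽) (b : ℝ) : Prop :=
  TrivialIn 𝔽 (sublevel K f b) n α ∧ ∀ q < b, ¬ TrivialIn 𝔽 (sublevel K f q) n α

/-- `Δ` is the terminal simplex of `[α]` in the filtration `K^f`: the simplex added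
at the level where `[α]` terminates. -/
def TerminalSimplex (K : SComplex V) (f : Finset V → ℝ) (n : ℕ) (α : Finset V →₀ 𝔽)
    (Δ : Finset V) : Prop :=
  Δ ∈ K.faces ∧ TerminatesAt 𝔽 K f n α (f Δ)

/-- `Σ_ε`: the set of terminal simplices of `[α]` over all injective filtration
functions within sup-distance `ε` of `f`. -/
def TermSet (K : SComplex V) (f : Finset V → ℝ) (n : ℕ) (α : Finset V →₀ 𝔽) (ε : ℝ) :
    Set (Finset V) :=
  {Δ | ∃ g, IsInjFiltration K g ∧ DistLE K f g ε ∧ TerminalSimplex 𝔽 K g n α Δ}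

/-- `τ` gives birth to a class in `H_n(K^f)`. -/
def IsBirthSimplex (K : SComplex V) (f : Finset V → ℝ) (n : ℕ) (τ : Finset V) : Prop :=
  τ ∈ K.faces ∧ ∃ β : Finset V →₀ 𝔽, BornAt 𝔽 K f n β (f τ)

/-- `τ` terminates a class in `H_n(K^f)`. -/
def IsTerminalSimplexOf (K : SComplex V) (f : Finset V → ℝ) (n : ℕ) (τ : Finset V) : Prop :=
  τ ∈ K.faces ∧ ∃ (β : Finset V →₀ 𝔽) (a : ℝ),
    BornAt 𝔽 K f n β a ∧ TerminatesAt 𝔽 K f n β (f τ)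

/-- The linear order on the faces of `K` induced by `g`. -/
def inducedRel (K : SComplex V) (g : Finset V → ℝ) :
    {s // s ∈ K.faces} → {s // s ∈ K.faces} → Prop :=
  fun s t => g s.1 < g t.1

/-- `Π_ε`: the set of orders on the faces of `K` induced by injective filtration
functions within sup-distance `ε` of `f`. -/
def OrderSet (K : SComplex V) (f : Finset V → ℝ) (ε : ℝ) :
    Set ({s // s ∈ K.faces} → {s // s ∈ K.faces} → Prop) :=
  {r | ∃ g, IsInjFiltration K g ∧ DistLE K f g ε ∧ r = inducedRel K g}

/-- `f` is generic: equal absolute differences of `f`-values occur only for the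
same unordered pair of faces. -/
def Generic (K : SComplex V) (f : Finset V → ℝ) : Prop :=
  ∀ s ∈ K.faces, ∀ t ∈ K.faces, ∀ s' ∈ K.faces, ∀ t' ∈ K.faces,
    s ≠ t → s' ≠ t' → |f s - f t| = |f s' - f t'| →
    (s = s' ∧ t = t') ∨ (s = t' ∧ t = s')

/-- The rank of the map `H_n(K^f_p) → H_n(K^f_q)`, realized as the dimension of
the image of the cycles at level `p` in the quotient by boundaries at level `q`. -/
noncomputable def persRank (K : SComplex V) (f : Finset V → ℝ) (n : ℕ) (p q : ℝ) : ℕ :=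
  Module.finrank 𝔽
    ↥(Submodule.map (boundariesIn 𝔽 (sublevel K f q) n).mkQ (cyclesIn 𝔽 (sublevel K f p) n))

/-- `[a, b)` is a bar of the `n`-th persistence module of `K^f`: the standard
inclusion–exclusion of ranks equals `1` for all sufficiently small offsets. -/
def IsBar (K : SComplex V) (f : Finset V → ℝ) (n : ℕ) (a b : ℝ) : Prop :=
  a < b ∧ ∃ δ > 0, ∀ ε : ℝ, 0 < ε → ε < δ →
    persRank 𝔽 K f n a (b - ε) + persRank 𝔽 K f n (a - ε) b
      = persRank 𝔽 K f n a b + persRank 𝔽 K f n (a - ε) (b - ε) + 1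

/-- Proposition `switch`: swapping two `n`-simplices whose
`f`-values are within `2ε` by an `ε`-perturbation. -/
theorem stmt0 {V : Type*} [LinearOrder V] (K : SComplex V) (f : Finset V → ℝ)
    (hf : IsInjFiltration K f) (n : ℕ) (σ₁ σ₂ : Finset V)
    (h1 : σ₁ ∈ K.faces) (h2 : σ₂ ∈ K.faces) (hne : σ₁ ≠ σ₂)
    (hd1 : σ₁.card = n + 1) (hd2 : σ₂.card = n + 1)
    (ε : ℝ) (hε : 0 < ε) (hlt : f σ₁ < f σ₂) (hlt2 : f σ₂ < f σ₁ + 2 * ε) :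
    ∃ g : Finset V → ℝ, IsInjFiltration K g ∧ DistLE K f g ε ∧ g σ₂ < g σ₁ := by
    classical
  obtain ⟨hmono, hinj⟩ := hf
  set a := f σ₁ with ha
  set b := f σ₂ with hb
  set m : ℝ := (a + b) / 2 with hm
  set δ : ℝ := (2 * ε - (b - a)) / 4 with hδdef
  have hδ : 0 < δ := by rw [hδdef]; linarith
  have hab : a < b := hlt
  set g₀ : Finset V → ℝ := fun s =>
    if σ₁ ⊆ s then max (f s) (m + δ) else if s ⊆ σ₂ then min (f s) (m - δ) else f s
    with hg₀def
  have hns : ¬ σ₁ ⊆ σ₂ := by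
    intro h
    exact hne (Finset.eq_of_subset_of_card_le h (by rw [hd1, hd2]))
  have hg₀σ₁ : g₀ σ₁ = m + δ := by
    show (if σ₁ ⊆ σ₁ then max (f σ₁) (m + δ) else if σ₁ ⊆ σ₂ then min (f σ₁) (m - δ) else f σ₁)
        = m + δ
    rw [if_pos (Finset.Subset.refl σ₁), max_eq_right]
    rw [hm]; linarith
  have hg₀σ₂ : g₀ σ₂ = m - δ := by
    show (if σ₁ ⊆ σ₂ then max (f σ₂) (m + δ) else if σ₂ ⊆ σ₂ then min (f σ₂) (m - δ) else f σ₂)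
        = m - δ
    rw [if_neg hns, if_pos (Finset.Subset.refl σ₂), min_eq_right]
    rw [hm]; linarith
  have hg₀mono : ∀ s ∈ K.faces, ∀ t ∈ K.faces, s ⊆ t → g₀ s ≤ g₀ t := by
    intro s hs t ht hst
    have hfst : f s ≤ f t := hmono s hs t ht hst
    by_cases h1s : σ₁ ⊆ s
    · have h1t : σ₁ ⊆ t := h1s.trans hst
      simp only [hg₀def, if_pos h1s, if_pos h1t]
      exact max_le_max hfst le_rfl
    · by_cases h2s : s ⊆ σ₂
      · simp only [hg₀def, if_neg h1s, if_pos h2s]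
        by_cases h1t : σ₁ ⊆ t
        · rw [if_pos h1t]
          refine le_trans (min_le_right _ _) (le_trans ?_ (le_max_right _ _))
          linarith
        · rw [if_neg h1t]
          by_cases h2t : t ⊆ σ₂
          · rw [if_pos h2t]; exact min_le_min hfst le_rfl
          · rw [if_neg h2t]; exact le_trans (min_le_left _ _) hfst
      · by_cases h1t : σ₁ ⊆ t
        · simp only [hg₀def, if_neg h1s, if_neg h2s, if_pos h1t]
          exact hfst.trans (le_max_left _ _)
        · have h2t : ¬ t ⊆ σ₂ := fun h => h2s (hst.trans h)
          simp only [hg₀def, if_neg h1s, if_neg h2s, if_neg h1t, if_neg h2t]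
          exact hfst
  have hg₀dist : ∀ s ∈ K.faces, |f s - g₀ s| ≤ (b - a) / 2 + δ := by
    intro s hs
    by_cases h1s : σ₁ ⊆ s
    · have hfa : a ≤ f s := hmono σ₁ h1 s hs h1s
      simp only [hg₀def, if_pos h1s]
      rw [abs_le]
      rcases max_cases (f s) (m + δ) with ⟨h, _⟩ | ⟨h, _⟩ <;> rw [h] <;>
        constructor <;> linarith
    · by_cases h2s : s ⊆ σ₂
      · have hfb : f s ≤ b := hmono s hs σ₂ h2 h2s
        simp only [hg₀def, if_neg h1s, if_pos h2s]
        rw [abs_le]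
        rcases min_cases (f s) (m - δ) with ⟨h, _⟩ | ⟨h, _⟩ <;> rw [h] <;>
          constructor <;> linarith
      · simp only [hg₀def, if_neg h1s, if_neg h2s, sub_self, abs_zero]
        linarith
  obtain ⟨γ, hγpos, hγ⟩ :
      ∃ γ > 0, ∀ s ∈ K.faces, ∀ t ∈ K.faces, g₀ s ≠ g₀ t → γ ≤ |g₀ s - g₀ t| := by
    set P : Finset (Finset V × Finset V) :=
      (K.faces ×ˢ K.faces).filter (fun p => g₀ p.1 ≠ g₀ p.2) with hP
    by_cases hPne : P.Nonempty
    · obtain ⟨p, hpP, hmin⟩ := P.exists_min_image (fun p => |g₀ p.1 - g₀ p.2|) hPne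
      refine ⟨|g₀ p.1 - g₀ p.2|,
        abs_pos.mpr (sub_ne_zero.mpr (Finset.mem_filter.mp hpP).2), ?_⟩
      intro s hs t ht hne'
      exact hmin (s, t)
        (Finset.mem_filter.mpr ⟨Finset.mem_product.mpr ⟨hs, ht⟩, hne'⟩)
    · refine ⟨1, one_pos, ?_⟩
      intro s hs t ht hne'
      exact absurd ⟨(s, t),
        Finset.mem_filter.mpr ⟨Finset.mem_product.mpr ⟨hs, ht⟩, hne'⟩⟩ hPne
  set η : ℝ := min (γ / 4) (δ / 4) with hηdef
  have hηpos : 0 < η := lt_min (by linarith) (by linarith)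
  have hηγ : η ≤ γ / 4 := min_le_left _ _
  have hηδ : η ≤ δ / 4 := min_le_right _ _
  have hpi : Real.pi ≤ 4 := Real.pi_le_four
  have harb : ∀ x : ℝ, |Real.arctan x| < 2 := by
    intro x
    rw [abs_lt]
    constructor
    · have := Real.neg_pi_div_two_lt_arctan x; linarith
    · have := Real.arctan_lt_pi_div_two x; linarith
  refine ⟨fun s => g₀ s + η * Real.arctan (f s), ⟨?_, ?_⟩, ?_, ?_⟩
  · intro s hs t ht hst
    have hgm := hg₀mono s hs t ht hst
    have harm : Real.arctan (f s) ≤ Real.arctan (f t) :=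
      Real.arctan_strictMono.monotone (hmono s hs t ht hst)
    dsimp only
    linarith [mul_le_mul_of_nonneg_left harm hηpos.le]
  · intro s hs t ht heq
    dsimp only at heq
    by_cases h : g₀ s = g₀ t
    · have : Real.arctan (f s) = Real.arctan (f t) := by
        have : η * Real.arctan (f s) = η * Real.arctan (f t) := by linarith
        exact mul_left_cancel₀ (ne_of_gt hηpos) this
      exact hinj s hs t ht (Real.arctan_injective this)
    · exfalso
      have h1 := hγ s hs t ht h
      have h2 : g₀ s - g₀ t = η * (Real.arctan (f t) - Real.arctan (f s)) := by linarith
      have h3 : |g₀ s - g₀ t| ≤ η * (|Real.arctan (f t)| + |Real.arctan (f s)|) := by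
        rw [h2, abs_mul, abs_of_pos hηpos]
        exact mul_le_mul_of_nonneg_left (abs_sub _ _) (le_of_lt hηpos)
      have h4 := harb (f s)
      have h5 := harb (f t)
      have h6 : η * (|Real.arctan (f t)| + |Real.arctan (f s)|) < η * 4 := by
        apply mul_lt_mul_of_pos_left _ hηpos
        linarith
      linarith
  · intro s hs
    dsimp only
    have h1 := hg₀dist s hs
    have h2 := harb (f s)
    have h3 : |f s - (g₀ s + η * Real.arctan (f s))| ≤
        |f s - g₀ s| + |η * Real.arctan (f s)| := by
      have := abs_sub (f s - g₀ s) (η * Real.arctan (f s))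
      calc |f s - (g₀ s + η * Real.arctan (f s))|
          = |(f s - g₀ s) - η * Real.arctan (f s)| := by ring_nf
        _ ≤ |f s - g₀ s| + |η * Real.arctan (f s)| := abs_sub _ _
    have h4 : |η * Real.arctan (f s)| ≤ η * 2 := by
      rw [abs_mul, abs_of_pos hηpos]
      exact mul_le_mul_of_nonneg_left (le_of_lt h2) (le_of_lt hηpos)
    have : (b - a) / 2 + δ + η * 2 ≤ ε := by rw [hδdef] at *; linarith
    linarith
  · dsimp only
    rw [hg₀σ₁, hg₀σ₂]
    have h1 := harb a
    have h2 := harb b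
    have h3 : |Real.arctan b - Real.arctan a| ≤ |Real.arctan b| + |Real.arctan a| :=
      abs_sub _ _
    have h4 : Real.arctan b - Real.arctan a ≤ 4 := by
      have := le_abs_self (Real.arctan b - Real.arctan a); linarith
    linarith [mul_le_mul_of_nonneg_left h4 hηpos.le]
end

section
/- Let K be a finite simplicial complex with an injective filtration function f, and for each ε > 0 let Π_ε denote the set of linear orders on the simplices of K induced by injective filtration functions g with ‖f − g‖_∞ ≤ ε. Then for every t > 0 there exists δ > 0 such that Π_ε = Π_t for all ε ∈ (t − δ, t]; in particular, the function ε ↦ Π_ε is left-continuous (constant on some half-open interval ending at each t). -/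
open scoped BigOperators

variable {V : Type*} [LinearOrder V]

variable (𝔽 : Type*) [Field 𝔽]

lemma orderSet_mono {V : Type*} [LinearOrder V] (K : SComplex V) (f : Finset V → ℝ)
    {ε ε' : ℝ} (h : ε ≤ ε') : OrderSet K f ε ⊆ OrderSet K f ε' := by
  rintro r ⟨g, h1, h2, h3⟩
  exact ⟨g, h1, fun s hs => (h2 s hs).trans h, h3⟩

lemma orderSet_key {V : Type*} [LinearOrder V] (K : SComplex V) (f : Finset V → ℝ)
    {t : ℝ} (ht : 0 < t) {r} (hr : r ∈ OrderSet K f t) :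
    ∃ ε, ε < t ∧ r ∈ OrderSet K f ε := by
  classical
  obtain ⟨g, ⟨hg1, hg2⟩, hgd, rfl⟩ := hr
  set P := (K.faces ×ˢ K.faces).filter (fun p => p.1 ≠ p.2) with hP
  set m := (insert (1:ℝ) (P.image (fun p => |g p.1 - g p.2|))).min'
    ⟨1, Finset.mem_insert_self _ _⟩ with hm
  set M := (insert (0:ℝ) (P.image (fun p => |f p.1 - f p.2|))).max'
    ⟨0, Finset.mem_insert_self _ _⟩ with hM
  have hm0 : 0 < m := by
    have := Finset.min'_mem (insert (1:ℝ) (P.image (fun p => |g p.1 - g p.2|)))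
      ⟨1, Finset.mem_insert_self _ _⟩
    rw [← hm, Finset.mem_insert] at this
    rcases this with h | h
    · rw [h]; norm_num
    · obtain ⟨p, hp, hpe⟩ := Finset.mem_image.mp h
      rw [hP, Finset.mem_filter, Finset.mem_product] at hp
      have : g p.1 ≠ g p.2 := fun he => hp.2 (hg2 _ hp.1.1 _ hp.1.2 he)
      rw [← hpe]
      exact abs_pos.mpr (sub_ne_zero.mpr this)
  have hM0 : 0 ≤ M := Finset.le_max' _ 0 (Finset.mem_insert_self _ _)
  have hmle : ∀ s ∈ K.faces, ∀ u ∈ K.faces, s ≠ u → m ≤ |g s - g u| := by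
    intro s hs u hu hsu
    rw [hm]
    apply Finset.min'_le
    exact Finset.mem_insert_of_mem (Finset.mem_image.mpr
      ⟨(s, u), Finset.mem_filter.mpr ⟨Finset.mem_product.mpr ⟨hs, hu⟩, hsu⟩, rfl⟩)
  have hMge : ∀ s ∈ K.faces, ∀ u ∈ K.faces, s ≠ u → |f s - f u| ≤ M := by
    intro s hs u hu hsu
    rw [hM]
    apply Finset.le_max'
    exact Finset.mem_insert_of_mem (Finset.mem_image.mpr
      ⟨(s, u), Finset.mem_filter.mpr ⟨Finset.mem_product.mpr ⟨hs, hu⟩, hsu⟩, rfl⟩)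
  set c := m / (m + M + 1) with hc
  have hD : (0:ℝ) < m + M + 1 := by linarith
  have hcD : c * (m + M + 1) = m := div_mul_cancel₀ _ (ne_of_gt hD)
  have hc0 : 0 < c := div_pos hm0 hD
  have hc1 : c < 1 := (div_lt_one hD).mpr (by linarith)
  have hcM : c * M < (1 - c) * m := by nlinarith [hcD, hc0]
  have hkey : ∀ s ∈ K.faces, ∀ u ∈ K.faces, s ≠ u →
      c * |f s - f u| < (1 - c) * |g s - g u| := by
    intro s hs u hu hsu
    calc c * |f s - f u| ≤ c * M := by
          exact mul_le_mul_of_nonneg_left (hMge s hs u hu hsu) hc0.le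
      _ < (1 - c) * m := hcM
      _ ≤ (1 - c) * |g s - g u| := by
          exact mul_le_mul_of_nonneg_left (hmle s hs u hu hsu) (by linarith)
  set g' := fun s => (1 - c) * g s + c * f s with hg'
  have fwd : ∀ s ∈ K.faces, ∀ u ∈ K.faces, g s < g u → g' s < g' u := by
    intro s hs u hu hlt
    have hsu : s ≠ u := fun h => by rw [h] at hlt; exact lt_irrefl _ hlt
    have h1 := hkey s hs u hu hsu
    have h2 : |g s - g u| = -(g s - g u) := abs_of_neg (by linarith)
    have h3 : -(f s - f u) ≤ |f s - f u| := neg_le_abs _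
    have h4 : f s - f u ≤ |f s - f u| := le_abs_self _
    simp only [hg']
    nlinarith
  have hord : ∀ s ∈ K.faces, ∀ u ∈ K.faces, (g s < g u ↔ g' s < g' u) := by
    intro s hs u hu
    constructor
    · exact fwd s hs u hu
    · intro h
      rcases lt_trichotomy (g s) (g u) with h' | h' | h'
      · exact h'
      · exfalso
        have : s = u := hg2 s hs u hu h'
        rw [this] at h; exact lt_irrefl _ h
      · exact absurd (fwd u hu s hs h') (lt_asymm h)
  refine ⟨(1 - c) * t, by nlinarith, g', ⟨?_, ?_⟩, ?_, ?_⟩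
  · intro s hs u hu hsub
    rcases eq_or_ne s u with rfl | hne
    · exact le_refl _
    · have : g s ≤ g u := hg1 s hs u hu hsub
      have hne' : g s ≠ g u := fun h => hne (hg2 s hs u hu h)
      exact (fwd s hs u hu (lt_of_le_of_ne this hne')).le
  · intro s hs u hu heq
    by_contra hne
    rcases lt_trichotomy (g s) (g u) with h' | h' | h'
    · exact absurd heq (ne_of_lt (fwd s hs u hu h'))
    · exact hne (hg2 s hs u hu h')
    · exact absurd heq.symm (ne_of_lt (fwd u hu s hs h'))
  · intro s hs
    have : f s - g' s = (1 - c) * (f s - g s) := by simp only [hg']; ring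
    rw [this, abs_mul, abs_of_nonneg (by linarith : (0:ℝ) ≤ 1 - c)]
    exact mul_le_mul_of_nonneg_left (hgd s hs) (by linarith)
  · funext s u
    exact propext (hord s.1 s.2 u.1 u.2)

/-- Lemma `LemmaUSC` for `Π_ε`: `ε ↦ Π_ε` is left-continuous:
constant on a half-open interval `(t - δ, t]` at each `t > 0`. -/
theorem stmt3 {V : Type*} [LinearOrder V] (K : SComplex V) (f : Finset V → ℝ)
    (hf : IsInjFiltration K f) :
    ∀ t : ℝ, 0 < t → ∃ δ > 0, ∀ ε : ℝ, t - δ < ε → ε ≤ t →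
      OrderSet K f ε = OrderSet K f t := by
  classical
  intro t ht
  have hfin : (OrderSet K f t).Finite := Set.toFinite _
  have hne : inducedRel K f ∈ OrderSet K f t :=
    ⟨f, hf, fun s hs => by simp [abs_nonneg]; linarith, rfl⟩
  choose e he1 he2 using fun r (hr : r ∈ OrderSet K f t) => orderSet_key K f ht hr
  set T := hfin.toFinset with hT
  have hTne : T.Nonempty := ⟨_, hfin.mem_toFinset.mpr hne⟩
  have hTane : (T.attach.image (fun r => e r.1 (hfin.mem_toFinset.mp r.2))).Nonempty :=
    Finset.Nonempty.image (Finset.attach_nonempty_iff.mpr hTne) _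
  set mm := (T.attach.image (fun r => e r.1 (hfin.mem_toFinset.mp r.2))).max' hTane with hmm
  have hmmlt : mm < t := by
    have := Finset.max'_mem _ hTane
    rw [← hmm] at this
    obtain ⟨r, _, hre⟩ := Finset.mem_image.mp this
    rw [← hre]
    exact he1 _ _
  have hmem : ∀ r ∈ OrderSet K f t, r ∈ OrderSet K f mm := by
    intro r hr
    have hle : e r hr ≤ mm := by
      rw [hmm]
      apply Finset.le_max'
      exact Finset.mem_image.mpr ⟨⟨r, hfin.mem_toFinset.mpr hr⟩, Finset.mem_attach _ _, rfl⟩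
    exact orderSet_mono K f hle (he2 r hr)
  refine ⟨t - mm, by linarith, fun ε hε1 hε2 => ?_⟩
  apply Set.Subset.antisymm (orderSet_mono K f hε2)
  intro r hr
  exact orderSet_mono K f (by linarith : mm ≤ ε) (hmem r hr)
end

section
/- For every integer n ≥ 1 there exists a finite simplicial complex K (a cycle graph on n+2 vertices), an injective filtration function f on K, a 0-dimensional homology class [α] born at a and terminating at b, and a threshold t₀ ∈ (0, (b−a)/2) such that |Σ_ε| = 1 for all ε ≤ t₀ while |Σ_ε| ≥ n + 2 for all ε > t₀ sufficiently close to t₀; in particular, the function ε ↦ |Σ_ε| can jump from 1 to n + 2. -/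
open scoped BigOperators

variable {V : Type*} [LinearOrder V]

variable (𝔽 : Type*) [Field 𝔽]

section Aux
variable {V : Type*} [LinearOrder V]
variable {𝔽 : Type*} [Field 𝔽]

lemma bdry_single (s : Finset V) (c : 𝔽) :
    bdry 𝔽 (Finsupp.single s c) =
      ∑ x ∈ s, ((-1 : 𝔽) ^ (s.filter (fun y => y < x)).card) • Finsupp.single (s.erase x) c := by
  rw [bdry, Finsupp.lsum_single]
  rw [LinearMap.sum_apply]
  refine Finset.sum_congr rfl fun x _ => ?_
  rw [LinearMap.smul_apply, Finsupp.lsingle_apply]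

lemma bdry_single_singleton (v : V) (c : 𝔽) :
    bdry 𝔽 (Finsupp.single {v} c) = Finsupp.single ∅ c := by
  rw [bdry_single, Finset.sum_singleton, Finset.filter_singleton]
  simp

lemma bdry_single_pair {a b : V} (hab : a < b) (c : 𝔽) :
    bdry 𝔽 (Finsupp.single {a, b} c) = Finsupp.single {b} c - Finsupp.single {a} c := by
  have hne : a ≠ b := ne_of_lt hab
  have h1 : ({a, b} : Finset V).filter (fun y => y < a) = ∅ := by
    rw [Finset.eq_empty_iff_forall_notMem]
    intro x
    simp only [Finset.mem_filter, Finset.mem_insert, Finset.mem_singleton, not_and]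
    rintro (rfl | rfl)
    · exact lt_irrefl _
    · exact not_lt.mpr hab.le
  have h2 : ({a, b} : Finset V).filter (fun y => y < b) = {a} := by
    ext x
    simp only [Finset.mem_filter, Finset.mem_insert, Finset.mem_singleton]
    constructor
    · rintro ⟨rfl | rfl, hlt⟩
      · rfl
      · exact absurd hlt (lt_irrefl _)
    · rintro rfl; exact ⟨Or.inl rfl, hab⟩
  have h3 : ({a, b} : Finset V).erase a = {b} := by
    ext x
    simp only [Finset.mem_erase, Finset.mem_insert, Finset.mem_singleton]
    constructor
    · rintro ⟨hx, rfl | rfl⟩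
      · exact absurd rfl hx
      · rfl
    · rintro rfl; exact ⟨hne.symm, Or.inr rfl⟩
  have h4 : ({a, b} : Finset V).erase b = {a} := by
    ext x
    simp only [Finset.mem_erase, Finset.mem_insert, Finset.mem_singleton]
    constructor
    · rintro ⟨hx, rfl | rfl⟩
      · rfl
      · exact absurd rfl hx
    · rintro rfl; exact ⟨hne, Or.inl rfl⟩
  rw [bdry_single, Finset.sum_insert (by simp [hne]), Finset.sum_singleton, h1, h2, h3, h4]
  simp only [Finset.card_empty, Finset.card_singleton, pow_zero, pow_one, one_smul, neg_one_smul]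
  abel
end Aux
section Aux2
variable {V : Type*} [LinearOrder V]
variable {𝔽 : Type*} [Field 𝔽]

lemma bdry_single_pair2 {s : Finset V} {a b : V} (hab : a < b) (ha : a ∈ s) (hb : b ∈ s)
    (hcard : s.card = 2) (c : 𝔽) :
    bdry 𝔽 (Finsupp.single s c) = Finsupp.single {b} c - Finsupp.single {a} c := by
  have hs : s = {a, b} := by
    apply (Finset.eq_of_subset_of_card_le
      (Finset.insert_subset ha (Finset.singleton_subset_iff.mpr hb)) _).symm
    rw [hcard, Finset.card_pair (ne_of_lt hab)]
  rw [hs]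
  exact bdry_single_pair hab c
end Aux2
open Fin.NatCast
namespace S16
open Finset

def edg (n : ℕ) (i : Fin (n+2)) : Finset (Fin (n+2)) := {i, i + 1}

def Kc (n : ℕ) : SComplex (Fin (n+2)) where
  faces := (Finset.univ.image fun i : Fin (n + 2) => ({i} : Finset (Fin (n + 2)))) ∪
      (Finset.univ.image fun i : Fin (n + 2) => ({i, i + 1} : Finset (Fin (n + 2))))
  nonempty_of_mem := by
    intro s hs
    rcases Finset.mem_union.mp hs with h | h <;>
    · obtain ⟨i, -, rfl⟩ := Finset.mem_image.mp h
      exact ⟨i, by simp⟩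
  down_closed := by
    intro s hs t hts htne
    rcases Finset.mem_union.mp hs with h | h
    · obtain ⟨i, -, rfl⟩ := Finset.mem_image.mp h
      rcases Finset.subset_singleton_iff.mp hts with rfl | rfl
      · exact absurd htne (by simp)
      · exact hs
    · obtain ⟨i, -, rfl⟩ := Finset.mem_image.mp h
      by_cases hi : i ∈ t <;> by_cases hj : i + 1 ∈ t
      · have : t = {i, i+1} := Finset.Subset.antisymm hts
          (Finset.insert_subset hi (Finset.singleton_subset_iff.mpr hj))
        rw [this]; exact hs
      · have : t = {i} := by
          apply Finset.Subset.antisymm _ (Finset.singleton_subset_iff.mpr hi)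
          intro x hx
          rcases Finset.mem_insert.mp (hts hx) with rfl | hx'
          · exact Finset.mem_singleton_self x
          · rw [Finset.mem_singleton.mp hx'] at hx; exact absurd hx hj
        rw [this]
        exact Finset.mem_union_left _ (Finset.mem_image.mpr ⟨i, Finset.mem_univ i, rfl⟩)
      · have : t = {i+1} := by
          apply Finset.Subset.antisymm _ (Finset.singleton_subset_iff.mpr hj)
          intro x hx
          rcases Finset.mem_insert.mp (hts hx) with rfl | hx'
          · exact absurd hx hi
          · exact hx'
        rw [this]
        exact Finset.mem_union_left _ (Finset.mem_image.mpr ⟨i+1, Finset.mem_univ _, rfl⟩)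
      · obtain ⟨x, hx⟩ := htne
        rcases Finset.mem_insert.mp (hts hx) with rfl | hx'
        · exact absurd hx hi
        · rw [Finset.mem_singleton.mp hx'] at hx; exact absurd hx hj

variable {n : ℕ}

lemma vert_mem (v : Fin (n+2)) : ({v} : Finset (Fin (n+2))) ∈ (Kc n).faces :=
  Finset.mem_union_left _ (Finset.mem_image.mpr ⟨v, Finset.mem_univ v, rfl⟩)

lemma edg_mem (i : Fin (n+2)) : edg n i ∈ (Kc n).faces :=
  Finset.mem_union_right _ (Finset.mem_image.mpr ⟨i, Finset.mem_univ i, rfl⟩)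

lemma faces_cases {s : Finset (Fin (n+2))} (hs : s ∈ (Kc n).faces) :
    (∃ v, s = {v}) ∨ (∃ i, s = edg n i) := by
  rcases Finset.mem_union.mp hs with h | h
  · obtain ⟨i, -, rfl⟩ := Finset.mem_image.mp h; exact Or.inl ⟨i, rfl⟩
  · obtain ⟨i, -, rfl⟩ := Finset.mem_image.mp h; exact Or.inr ⟨i, rfl⟩

lemma self_ne_add_one (i : Fin (n+2)) : i ≠ i + 1 := by
  intro h
  have h1 : (1 : Fin (n+2)) = 0 := left_eq_add.mp h
  have := congrArg Fin.val h1
  simp [Fin.val_one] at this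

lemma edg_card (i : Fin (n+2)) : (edg n i).card = 2 :=
  Finset.card_pair (self_ne_add_one i)

lemma val_add_one_of_le {i : Fin (n+2)} (h : i.val ≤ n) : (i+1).val = i.val + 1 := by
  apply Fin.val_add_one_of_lt
  rw [Fin.lt_def, Fin.val_last]
  omega

lemma lt_add_one_of_le {i : Fin (n+2)} (h : i.val ≤ n) : i < i + 1 := by
  rw [Fin.lt_def, val_add_one_of_le h]
  omega

lemma val_natCast {k : ℕ} (h : k < n + 2) : ((k : Fin (n+2))).val = k := by
  rw [Fin.val_natCast, Nat.mod_eq_of_lt h]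

lemma natCast_last : ((n+1 : ℕ) : Fin (n+2)) = Fin.last (n+1) := by
  apply Fin.ext
  rw [val_natCast (by omega), Fin.val_last]

lemma last_ne_zero' : Fin.last (n+1) ≠ (0 : Fin (n+2)) := by
  intro h
  have := congrArg Fin.val h
  rw [Fin.val_last] at this
  simp at this

lemma last_add_one' : Fin.last (n+1) + 1 = (0 : Fin (n+2)) := by
  exact Fin.last_add_one (n+1)

lemma edg_top : edg n (Fin.last (n+1)) = {0, Fin.last (n+1)} := by
  rw [edg, last_add_one', Finset.pair_comm]

lemma two_ne_zero' (hn : 1 ≤ n) : (2 : Fin (n+2)) ≠ 0 := by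
  intro h
  have h2 : ((2:ℕ) : Fin (n+2)) = 0 := by rw [← h]; norm_cast
  have := congrArg Fin.val h2
  rw [val_natCast (by omega)] at this
  simp at this

lemma edg_inj (hn : 1 ≤ n) {i j : Fin (n+2)} (h : edg n i = edg n j) : i = j := by
  have hi : i ∈ ({j, j+1} : Finset (Fin (n+2))) := by
    rw [← edg, ← h]; exact Finset.mem_insert_self _ _
  have hj : j ∈ ({i, i+1} : Finset (Fin (n+2))) := by
    rw [← edg, h]; exact Finset.mem_insert_self _ _
  rcases Finset.mem_insert.mp hi with rfl | hi'
  · rfl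
  have hi2 := Finset.mem_singleton.mp hi'
  rcases Finset.mem_insert.mp hj with rfl | hj'
  · rfl
  have hj2 := Finset.mem_singleton.mp hj'
  exfalso
  apply two_ne_zero' hn
  have h22 : j = j + 2 := by
    conv_lhs => rw [hj2, hi2]
    rw [add_assoc, one_add_one_eq_two]
  exact (left_eq_add.mp h22)

end S16
namespace S16
variable {n : ℕ}

noncomputable def σv (n : ℕ) : ℝ := 1 / (4 * (n+2))

lemma σv_pos : 0 < σv n := by
  rw [σv]; positivity

lemma σv_bound : ((n:ℝ) + 2) * σv n = 1/4 := by
  rw [σv]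
  have : ((n:ℝ) + 2) ≠ 0 := by positivity
  field_simp

noncomputable def fc (n : ℕ) (s : Finset (Fin (n+2))) : ℝ :=
  if s.card ≤ 1 then ((s.sup id : Fin (n+2)) : ℕ) * σv n
  else if (0 : Fin (n+2)) ∈ s ∧ Fin.last (n+1) ∈ s then 10
  else 12 - ((n : ℝ) - ((s.inf id : Fin (n+2)) : ℕ)) * σv n

lemma fc_vert (v : Fin (n+2)) : fc n {v} = (v.val : ℝ) * σv n := by
  rw [fc, if_pos (by simp), Finset.sup_singleton]
  rfl

lemma fc_vert_nonneg (v : Fin (n+2)) : 0 ≤ fc n {v} := by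
  rw [fc_vert]
  have := σv_pos (n := n)
  positivity

lemma fc_vert_le (v : Fin (n+2)) : fc n {v} ≤ 1/4 := by
  rw [fc_vert]
  have h1 : (v.val : ℝ) ≤ (n:ℝ) + 2 := by
    have h2 : v.val ≤ n + 2 := le_of_lt v.isLt
    exact_mod_cast h2
  nlinarith [σv_pos (n := n), σv_bound (n := n)]

lemma fc_edg_reg (hn : 1 ≤ n) {i : Fin (n+2)} (h : i.val ≤ n) :
    fc n (edg n i) = 12 - ((n : ℝ) - i.val) * σv n := by
  rw [fc, if_neg (by rw [edg_card]; omega)]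
  rw [if_neg]
  · congr 2
    have hinf : (edg n i).inf id = i := by
      rw [edg, Finset.inf_insert, Finset.inf_singleton]
      exact inf_eq_left.mpr (le_of_lt (lt_add_one_of_le h))
    rw [hinf]
  · rintro ⟨h0, hl⟩
    rw [edg] at h0 hl
    rcases Finset.mem_insert.mp h0 with h0' | h0'
    · -- i = 0
      rcases Finset.mem_insert.mp hl with hl' | hl'
      · rw [← h0'] at hl'
        exact last_ne_zero' hl'
      · -- last = i + 1
        have := congrArg Fin.val (Finset.mem_singleton.mp hl')
        rw [Fin.val_last, val_add_one_of_le h] at this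
        have hi0 : i.val = 0 := by
          have := congrArg Fin.val h0'.symm
          simpa using this
        omega
    · have h0v := congrArg Fin.val (Finset.mem_singleton.mp h0')
      rw [val_add_one_of_le h] at h0v
      simp at h0v

lemma fc_edg_top (hn : 1 ≤ n) : fc n (edg n (Fin.last (n+1))) = 10 := by
  rw [edg_top, fc, if_neg, if_pos]
  · exact ⟨Finset.mem_insert_self _ _, Finset.mem_insert_of_mem (Finset.mem_singleton_self _)⟩
  · rw [Finset.card_pair (Ne.symm last_ne_zero')]
    omega

lemma fc_edg_reg_bounds (hn : 1 ≤ n) {i : Fin (n+2)} (h : i.val ≤ n) :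
    11 ≤ fc n (edg n i) ∧ fc n (edg n i) ≤ 12 := by
  rw [fc_edg_reg hn h]
  have h1 : (0:ℝ) ≤ (n:ℝ) - i.val := by
    have : (i.val : ℝ) ≤ (n:ℝ) := by exact_mod_cast h
    linarith
  have h2 : (n:ℝ) - i.val ≤ (n:ℝ) + 2 := by linarith [Nat.cast_nonneg (α := ℝ) i.val]
  constructor
  · nlinarith [σv_pos (n := n), σv_bound (n := n)]
  · nlinarith [σv_pos (n := n)]

lemma fc_edg_ge (hn : 1 ≤ n) (i : Fin (n+2)) : 10 ≤ fc n (edg n i) := by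
  by_cases h : i.val ≤ n
  · linarith [(fc_edg_reg_bounds hn h).1]
  · have hi : i = Fin.last (n+1) := by
      apply Fin.ext
      rw [Fin.val_last]
      have := i.isLt
      omega
    rw [hi, fc_edg_top hn]

lemma face_fc_cases (hn : 1 ≤ n) {s : Finset (Fin (n+2))} (hs : s ∈ (Kc n).faces) :
    (∃ v, s = {v}) ∨ (∃ i, s = edg n i ∧ 10 ≤ fc n s) := by
  rcases faces_cases hs with ⟨v, rfl⟩ | ⟨i, rfl⟩
  · exact Or.inl ⟨v, rfl⟩
  · exact Or.inr ⟨i, rfl, fc_edg_ge hn i⟩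

lemma fc_filtration (hn : 1 ≤ n) : IsInjFiltration (Kc n) (fc n) := by
  constructor
  · intro s hs t ht hst
    rcases faces_cases hs with ⟨v, rfl⟩ | ⟨i, rfl⟩ <;>
      rcases faces_cases ht with ⟨w, rfl⟩ | ⟨j, rfl⟩
    · rw [Finset.singleton_subset_iff, Finset.mem_singleton] at hst
      rw [hst]
    · linarith [fc_vert_le v, fc_edg_ge hn j]
    · exfalso
      have := Finset.card_le_card hst
      rw [edg_card, Finset.card_singleton] at this
      omega
    · have : edg n i = edg n j :=
        Finset.eq_of_subset_of_card_le hst (by rw [edg_card, edg_card])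
      rw [this]
  · intro s hs t ht hfe
    rcases faces_cases hs with ⟨v, rfl⟩ | ⟨i, rfl⟩ <;>
      rcases faces_cases ht with ⟨w, rfl⟩ | ⟨j, rfl⟩
    · rw [fc_vert, fc_vert] at hfe
      have : v.val = w.val := by
        have := mul_right_cancel₀ (ne_of_gt (σv_pos (n:=n))) hfe
        exact_mod_cast this
      rw [Fin.ext this]
    · exfalso; linarith [fc_vert_le v, fc_edg_ge hn j]
    · exfalso; linarith [fc_vert_le w, fc_edg_ge hn i]
    · -- both edges
      congr 1
      by_cases hi : i.val ≤ n <;> by_cases hj : j.val ≤ n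
      · rw [fc_edg_reg hn hi, fc_edg_reg hn hj] at hfe
        have : (n:ℝ) - i.val = (n:ℝ) - j.val := by
          have := mul_right_cancel₀ (ne_of_gt (σv_pos (n:=n))) (by linarith : ((n:ℝ) - i.val) * σv n = ((n:ℝ) - j.val) * σv n)
          exact this
        have : (i.val : ℝ) = j.val := by linarith
        exact Fin.ext (by exact_mod_cast this)
      · exfalso
        have hjl : j = Fin.last (n+1) := Fin.ext (by have := j.isLt; rw [Fin.val_last]; omega)
        rw [hjl, fc_edg_top hn] at hfe
        have h1 : (n:ℝ) - i.val ≤ (n:ℝ) + 2 := by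
          have : (0:ℝ) ≤ (i.val : ℝ) := Nat.cast_nonneg _
          linarith
        rw [fc_edg_reg hn hi] at hfe
        have h2 : (0:ℝ) ≤ (n:ℝ) - i.val := by
          have : (i.val : ℝ) ≤ (n:ℝ) := by exact_mod_cast hi
          linarith
        nlinarith [σv_pos (n := n), σv_bound (n := n)]
      · exfalso
        have hil : i = Fin.last (n+1) := Fin.ext (by have := i.isLt; rw [Fin.val_last]; omega)
        rw [hil, fc_edg_top hn] at hfe
        have h1 : (n:ℝ) - j.val ≤ (n:ℝ) + 2 := by
          have : (0:ℝ) ≤ (j.val : ℝ) := Nat.cast_nonneg _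
          linarith
        rw [fc_edg_reg hn hj] at hfe
        have h2 : (0:ℝ) ≤ (n:ℝ) - j.val := by
          have : (j.val : ℝ) ≤ (n:ℝ) := by exact_mod_cast hj
          linarith
        nlinarith [σv_pos (n := n), σv_bound (n := n)]
      · have hil : i = Fin.last (n+1) := Fin.ext (by have := i.isLt; rw [Fin.val_last]; omega)
        have hjl : j = Fin.last (n+1) := Fin.ext (by have := j.isLt; rw [Fin.val_last]; omega)
        rw [hil, hjl]

end S16
namespace S16
variable {n : ℕ}

noncomputable def αc (n : ℕ) : Finset (Fin (n+2)) →₀ ℚ :=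
  Finsupp.single {Fin.last (n+1)} 1 - Finsupp.single {0} 1

lemma vert_ne : ({Fin.last (n+1)} : Finset (Fin (n+2))) ≠ {0} := by
  intro h
  exact last_ne_zero' (Finset.singleton_injective h)

lemma αc_apply_last : αc n {Fin.last (n+1)} = 1 := by
  rw [αc, Finsupp.sub_apply, Finsupp.single_eq_same, Finsupp.single_eq_of_ne' (Ne.symm vert_ne)]
  norm_num

lemma αc_ne_zero : αc n ≠ 0 := by
  intro h
  have := αc_apply_last (n := n)
  rw [h] at this
  simp at this

lemma αc_support : (αc n).support ⊆ {({Fin.last (n+1)} : Finset (Fin (n+2))), {0}} := by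
  intro s hs
  have := Finsupp.support_sub (f := Finsupp.single ({Fin.last (n+1)} : Finset (Fin (n+2))) (1:ℚ)) (g := Finsupp.single {0} (1:ℚ)) hs
  rcases Finset.mem_union.mp this with h | h
  · exact Finset.mem_insert.mpr (Or.inl (Finset.mem_singleton.mp (Finsupp.support_single_subset h)))
  · exact Finset.mem_insert.mpr (Or.inr (Finsupp.support_single_subset h))

lemma bdry_αc : bdry ℚ (αc n) = 0 := by
  rw [αc, map_sub, bdry_single_singleton, bdry_single_singleton, sub_self]

lemma mem_sublevel {K : SComplex (Fin (n+2))} {g : Finset (Fin (n+2)) → ℝ} {r : ℝ}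
    {s : Finset (Fin (n+2))} : s ∈ sublevel K g r ↔ s ∈ K.faces ∧ g s ≤ r :=
  Finset.mem_filter

/-- below level 10 the `fc`-sublevel complex has no edges, so all boundaries vanish -/
lemma boundaries_bot (hn : 1 ≤ n) {r : ℝ} (hr : r < 10) {c : Finset (Fin (n+2)) →₀ ℚ}
    (hc : c ∈ boundariesIn ℚ (sublevel (Kc n) (fc n) r) 0) : c = 0 := by
  obtain ⟨d, hd, rfl⟩ := hc
  have hd0 : d = 0 := by
    apply Finsupp.support_eq_empty.mp
    rw [Finset.eq_empty_iff_forall_notMem]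
    intro s hs
    obtain ⟨hsL, hcard⟩ := hd s hs
    obtain ⟨hsK, hfc⟩ := mem_sublevel.mp hsL
    rcases face_fc_cases hn hsK with ⟨v, rfl⟩ | ⟨i, -, hge⟩
    · rw [Finset.card_singleton] at hcard; omega
    · linarith
  rw [hd0, map_zero]

lemma terminates_fc (hn : 1 ≤ n) : TerminatesAt ℚ (Kc n) (fc n) 0 (αc n) 10 := by
  constructor
  · -- trivial at 10 via the top edge
    refine ⟨Finsupp.single (edg n (Fin.last (n+1))) 1, ?_, ?_⟩
    · intro s hs
      have := Finsupp.support_single_subset hs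
      rw [Finset.mem_singleton.mp this]
      refine ⟨mem_sublevel.mpr ⟨edg_mem _, le_of_eq (fc_edg_top hn)⟩, edg_card _⟩
    · rw [edg_top, αc]
      have h0l : (0 : Fin (n+2)) < Fin.last (n+1) := by
        rw [Fin.lt_def, Fin.val_last]
        simp
      exact bdry_single_pair h0l 1
  · intro q hq htriv
    exact αc_ne_zero (boundaries_bot hn hq htriv)

lemma born_fc (hn : 1 ≤ n) : BornAt ℚ (Kc n) (fc n) 0 (αc n) ((n+1 : ℕ) * σv n) := by
  have ha10 : ((n+1 : ℕ) : ℝ) * σv n < 10 := by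
    have h1 : ((n+1:ℕ) : ℝ) ≤ (n:ℝ) + 2 := by push_cast; linarith
    nlinarith [σv_pos (n := n), σv_bound (n := n)]
  have hverts : ∀ v : Fin (n+2), ({v} : Finset (Fin (n+2))) ∈ sublevel (Kc n) (fc n) ((n+1:ℕ) * σv n) := by
    intro v
    refine mem_sublevel.mpr ⟨vert_mem v, ?_⟩
    rw [fc_vert]
    have : (v.val : ℝ) ≤ ((n+1:ℕ) : ℝ) := by
      have : v.val ≤ n+1 := by have := v.isLt; omega
      exact_mod_cast this
    nlinarith [σv_pos (n := n)]
  refine ⟨⟨?_, ?_⟩, ?_, ?_⟩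
  · -- chains
    intro s hs
    rcases Finset.mem_insert.mp (αc_support hs) with rfl | h
    · exact ⟨hverts _, Finset.card_singleton _⟩
    · rw [Finset.mem_singleton.mp h]
      exact ⟨hverts _, Finset.card_singleton _⟩
  · exact LinearMap.mem_ker.mpr bdry_αc
  · intro htriv
    exact αc_ne_zero (boundaries_bot hn ha10 htriv)
  · rintro q hq ⟨β, hβcyc, hβhom⟩
    have hβα : β = αc n := by
      have := boundaries_bot hn ha10 hβhom
      have := sub_eq_zero.mp this
      exact this.symm
    have hmem : ({Fin.last (n+1)} : Finset (Fin (n+2))) ∈ β.support := by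
      rw [hβα, Finsupp.mem_support_iff, αc_apply_last]
      norm_num
    obtain ⟨hsl, -⟩ := hβcyc.1 _ hmem
    obtain ⟨-, hle⟩ := mem_sublevel.mp hsl
    rw [fc_vert, Fin.val_last] at hle
    have hle' : ((n:ℝ)+1) * σv n ≤ q := by push_cast at hle; linarith
    have hq' : q < ((n:ℝ)+1) * σv n := by push_cast at hq; linarith
    linarith

end S16
namespace S16
variable {n : ℕ}

lemma card_two_face {s : Finset (Fin (n+2))} (hs : s ∈ (Kc n).faces) (h2 : s.card = 2) :
    ∃ i, s = edg n i := by
  rcases faces_cases hs with ⟨v, rfl⟩ | h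
  · rw [Finset.card_singleton] at h2; omega
  · exact h

lemma i_eq_last {i : Fin (n+2)} (h : ¬ i.val ≤ n) : i = Fin.last (n+1) :=
  Fin.ext (by have := i.isLt; rw [Fin.val_last]; omega)

lemma bdry_edg {i : Fin (n+2)} (h : i.val ≤ n) (c : ℚ) :
    bdry ℚ (Finsupp.single (edg n i) c) = Finsupp.single {i+1} c - Finsupp.single {i} c :=
  bdry_single_pair2 (lt_add_one_of_le h) (Finset.mem_insert_self _ _)
    (Finset.mem_insert_of_mem (Finset.mem_singleton_self _)) (edg_card i) c

noncomputable def φf (n j : ℕ) : (Finset (Fin (n+2)) →₀ ℚ) →ₗ[ℚ] ℚ :=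
  Finsupp.lsum ℚ (fun s =>
    (if j < ((s.sup id : Fin (n+2)) : ℕ) then (1:ℚ) else 0) • LinearMap.id)

lemma φf_single (j : ℕ) (s : Finset (Fin (n+2))) (c : ℚ) :
    φf n j (Finsupp.single s c) =
      (if j < ((s.sup id : Fin (n+2)) : ℕ) then (1:ℚ) else 0) * c := by
  rw [φf, Finsupp.lsum_single, LinearMap.smul_apply, LinearMap.id_apply, smul_eq_mul]

lemma φf_vert (j : ℕ) (v : Fin (n+2)) (c : ℚ) :
    φf n j (Finsupp.single {v} c) = (if j < v.val then (1:ℚ) else 0) * c := by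
  rw [φf_single, Finset.sup_singleton]
  rfl

lemma triv_iff (hn : 1 ≤ n) (g : Finset (Fin (n+2)) → ℝ) (r : ℝ) :
    TrivialIn ℚ (sublevel (Kc n) g r) 0 (αc n) ↔
      (g (edg n (Fin.last (n+1))) ≤ r ∨ ∀ i : ℕ, i ≤ n → g (edg n i) ≤ r) := by
  constructor
  · -- forward, by contradiction
    intro htriv
    by_contra hcon
    push_neg at hcon
    obtain ⟨hA, j, hj, hBj⟩ := hcon
    obtain ⟨c, hc, hbc⟩ := htriv
    -- the separating functional
    have hφbdry : φf n j (bdry ℚ c) = 0 := by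
      have hrw : bdry ℚ c = c.sum (fun s a => bdry ℚ (Finsupp.single s a)) := by
        conv_lhs => rw [← Finsupp.sum_single c]
        rw [map_finsuppSum]
      rw [hrw, map_finsuppSum]
      apply Finset.sum_eq_zero
      intro s hs
      obtain ⟨hsL, hcard⟩ := hc s hs
      obtain ⟨hsK, hgs⟩ := mem_sublevel.mp hsL
      obtain ⟨i, rfl⟩ := card_two_face hsK (by omega)
      show φf n j (bdry ℚ (Finsupp.single (edg n i) (c (edg n i)))) = 0
      by_cases hi : i.val ≤ n
      · have hij : i.val ≠ j := by
          intro hij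
          have heq : (↑j : Fin (n+2)) = i := Fin.ext (by rw [val_natCast (by omega)]; omega)
          rw [heq] at hBj
          linarith
        rw [bdry_edg hi, map_sub, φf_vert, φf_vert, val_add_one_of_le hi]
        have h1 : (if j < i.val + 1 then (1:ℚ) else 0) = (if j < i.val then (1:ℚ) else 0) := by
          by_cases hji : j < i.val
          · rw [if_pos hji, if_pos (by omega)]
          · rw [if_neg hji, if_neg (by omega)]
        rw [h1, sub_self]
      · rw [i_eq_last hi] at hgs
        exact absurd hgs (not_le.mpr hA)
    rw [hbc, αc, map_sub, φf_vert, φf_vert, Fin.val_last, Fin.val_zero,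
      if_pos (by omega), if_neg (by omega)] at hφbdry
    norm_num at hφbdry
  · rintro (hA | hB)
    · refine ⟨Finsupp.single (edg n (Fin.last (n+1))) 1, ?_, ?_⟩
      · intro s hs
        rw [Finset.mem_singleton.mp (Finsupp.support_single_subset hs)]
        exact ⟨mem_sublevel.mpr ⟨edg_mem _, hA⟩, edg_card _⟩
      · rw [edg_top, αc]
        have h0l : (0 : Fin (n+2)) < Fin.last (n+1) := by
          rw [Fin.lt_def, Fin.val_last]; simp
        exact bdry_single_pair h0l 1
    · refine ⟨∑ i ∈ Finset.range (n+1), Finsupp.single (edg n (i : Fin (n+2))) 1, ?_, ?_⟩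
      · apply Submodule.sum_mem
        intro i hi
        rw [Finset.mem_range] at hi
        intro s hs
        rw [Finset.mem_singleton.mp (Finsupp.support_single_subset hs)]
        exact ⟨mem_sublevel.mpr ⟨edg_mem _, hB i (by omega)⟩, edg_card _⟩
      · rw [map_sum]
        have hterm : ∀ i ∈ Finset.range (n+1),
            bdry ℚ (Finsupp.single (edg n (i : Fin (n+2))) (1:ℚ)) =
              Finsupp.single {((i+1 : ℕ) : Fin (n+2))} (1:ℚ) -
                Finsupp.single {((i : ℕ) : Fin (n+2))} (1:ℚ) := by
          intro i hi
          rw [Finset.mem_range] at hi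
          rw [bdry_edg (by rw [val_natCast (by omega)]; omega)]
          congr 2
          push_cast
          ring
        rw [Finset.sum_congr rfl hterm, Finset.sum_range_sub
          (f := fun k => Finsupp.single ({((k : ℕ) : Fin (n+2))} : Finset (Fin (n+2))) (1:ℚ))]
        rw [natCast_last, Nat.cast_zero, αc]

end S16
namespace S16
variable {n : ℕ}

noncomputable def Bv (n : ℕ) (g : Finset (Fin (n+2)) → ℝ) : ℝ :=
  ((Finset.range (n+1)).image (fun i : ℕ => g (edg n (i : Fin (n+2))))).max'
    (Finset.Nonempty.image ⟨0, Finset.mem_range.mpr (by omega)⟩ _)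

lemma Bv_le_iff {g : Finset (Fin (n+2)) → ℝ} {r : ℝ} :
    Bv n g ≤ r ↔ ∀ i : ℕ, i ≤ n → g (edg n (i : Fin (n+2))) ≤ r := by
  rw [Bv, Finset.max'_le_iff]
  constructor
  · intro h i hi
    exact h _ (Finset.mem_image.mpr ⟨i, Finset.mem_range.mpr (by omega), rfl⟩)
  · intro h y hy
    obtain ⟨i, hi, rfl⟩ := Finset.mem_image.mp hy
    exact h i (by rw [Finset.mem_range] at hi; omega)

lemma le_Bv {g : Finset (Fin (n+2)) → ℝ} {i : ℕ} (hi : i ≤ n) :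
    g (edg n (i : Fin (n+2))) ≤ Bv n g := by
  apply Finset.le_max'
  apply Finset.mem_image.mpr
  exact ⟨i, Finset.mem_range.mpr (Nat.lt_succ_of_le hi), rfl⟩

lemma triv_iff' (hn : 1 ≤ n) (g : Finset (Fin (n+2)) → ℝ) (r : ℝ) :
    TrivialIn ℚ (sublevel (Kc n) g r) 0 (αc n) ↔
      min (g (edg n (Fin.last (n+1)))) (Bv n g) ≤ r := by
  rw [triv_iff hn, min_le_iff, Bv_le_iff]

lemma term_level (hn : 1 ≤ n) {g : Finset (Fin (n+2)) → ℝ} {b' : ℝ}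
    (h : TerminatesAt ℚ (Kc n) g 0 (αc n) b') :
    b' = min (g (edg n (Fin.last (n+1)))) (Bv n g) := by
  have h1 : min (g (edg n (Fin.last (n+1)))) (Bv n g) ≤ b' := (triv_iff' hn g b').mp h.1
  rcases eq_or_lt_of_le h1 with heq | hlt
  · exact heq.symm
  · exact absurd ((triv_iff' hn g _).mpr le_rfl) (h.2 _ hlt)

lemma terminal_top (hn : 1 ≤ n) {g : Finset (Fin (n+2)) → ℝ} {Δ : Finset (Fin (n+2))}
    (hg : IsInjFiltration (Kc n) g)
    (hT : TerminalSimplex ℚ (Kc n) g 0 (αc n) Δ)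
    (hAB : g (edg n (Fin.last (n+1))) ≤ Bv n g) :
    Δ = edg n (Fin.last (n+1)) := by
  have h1 : g Δ = g (edg n (Fin.last (n+1))) := by
    rw [term_level hn hT.2, min_eq_left hAB]
  exact hg.2 Δ hT.1 _ (edg_mem _) h1

lemma fc_edg_n (hn : 1 ≤ n) : fc n (edg n ((n : ℕ) : Fin (n+2))) = 12 := by
  have hv : ((n : ℕ) : Fin (n+2)).val = n := val_natCast (by omega)
  rw [fc_edg_reg hn (le_of_eq hv), hv]
  simp

lemma terminal_fc_top (hn : 1 ≤ n) :
    TerminalSimplex ℚ (Kc n) (fc n) 0 (αc n) (edg n (Fin.last (n+1))) := by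
  refine ⟨edg_mem _, ?_⟩
  rw [fc_edg_top hn]
  exact terminates_fc hn

lemma small_eps (hn : 1 ≤ n) {ε : ℝ} (h0 : 0 < ε) (h1 : ε ≤ 1) :
    TermSet ℚ (Kc n) (fc n) 0 (αc n) ε = {edg n (Fin.last (n+1))} := by
  apply Set.eq_singleton_iff_unique_mem.mpr
  constructor
  · exact ⟨fc n, fc_filtration hn, fun s _ => by rw [sub_self, abs_zero]; exact h0.le,
      terminal_fc_top hn⟩
  · rintro Δ ⟨g, hgf, hgd, hT⟩
    apply terminal_top hn hgf hT
    have hda := hgd _ (edg_mem (Fin.last (n+1)))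
    rw [fc_edg_top hn] at hda
    have hA : g (edg n (Fin.last (n+1))) ≤ 10 + ε := by
      have := (abs_le.mp hda).1
      linarith
    have hdb := hgd _ (edg_mem ((n : ℕ) : Fin (n+2)))
    rw [fc_edg_n hn] at hdb
    have hB : 12 - ε ≤ g (edg n ((n : ℕ) : Fin (n+2))) := by
      have := (abs_le.mp hdb).2
      linarith
    have := le_Bv (g := g) (le_refl n)
    linarith

noncomputable def gbig (n : ℕ) (i : Fin (n+2)) (ε : ℝ) : Finset (Fin (n+2)) → ℝ :=
  fun s => if s = edg n (Fin.last (n+1)) then 10 + ε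
    else if s = edg n i then 11 + (ε-1)/2
    else if s.card = 2 then fc n s - 1 else fc n s

variable {i : Fin (n+2)} {ε : ℝ}

lemma i_ne_last (hi : i.val ≤ n) : i ≠ Fin.last (n+1) := by
  intro h
  rw [h, Fin.val_last] at hi
  omega

lemma gb_top : gbig n i ε (edg n (Fin.last (n+1))) = 10 + ε := if_pos rfl

lemma gb_i (hn : 1 ≤ n) (hi : i.val ≤ n) : gbig n i ε (edg n i) = 11 + (ε-1)/2 := by
  rw [gbig, if_neg (fun h => i_ne_last hi (edg_inj hn h)), if_pos rfl]

lemma gb_vert (v : Fin (n+2)) : gbig n i ε {v} = fc n {v} := by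
  have hc : ({v} : Finset (Fin (n+2))).card = 1 := Finset.card_singleton v
  have h1 : ({v} : Finset (Fin (n+2))) ≠ edg n (Fin.last (n+1)) := by
    intro h; rw [h, edg_card] at hc; omega
  have h2 : ({v} : Finset (Fin (n+2))) ≠ edg n i := by
    intro h; rw [h, edg_card] at hc; omega
  rw [gbig, if_neg h1, if_neg h2, if_neg (by omega)]

lemma gb_other (hn : 1 ≤ n) {j : Fin (n+2)} (hj1 : j ≠ Fin.last (n+1)) (hj2 : j ≠ i) :
    gbig n i ε (edg n j) = fc n (edg n j) - 1 := by
  rw [gbig, if_neg (fun h => hj1 (edg_inj hn h)), if_neg (fun h => hj2 (edg_inj hn h)),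
    if_pos (edg_card j)]

lemma gb_other_bounds (hn : 1 ≤ n) {j : Fin (n+2)} (hj1 : j ≠ Fin.last (n+1)) (hj2 : j ≠ i) :
    10 ≤ gbig n i ε (edg n j) ∧ gbig n i ε (edg n j) ≤ 11 := by
  have hjv : j.val ≤ n := by
    by_contra h
    exact hj1 (i_eq_last h)
  have := fc_edg_reg_bounds hn hjv
  rw [gb_other hn hj1 hj2]
  constructor <;> linarith

lemma gb_edge_ge (hn : 1 ≤ n) (hi : i.val ≤ n) (hε1 : 1 < ε) (j : Fin (n+2)) :
    10 ≤ gbig n i ε (edg n j) := by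
  by_cases hj1 : j = Fin.last (n+1)
  · rw [hj1, gb_top]; linarith
  by_cases hj2 : j = i
  · rw [hj2, gb_i hn hi]; linarith
  · exact (gb_other_bounds hn hj1 hj2).1

lemma gb_filtration (hn : 1 ≤ n) (hi : i.val ≤ n) (hε1 : 1 < ε) (hε2 : ε < 2) :
    IsInjFiltration (Kc n) (gbig n i ε) := by
  constructor
  · intro s hs t ht hst
    rcases faces_cases hs with ⟨v, rfl⟩ | ⟨js, rfl⟩ <;>
      rcases faces_cases ht with ⟨w, rfl⟩ | ⟨jt, rfl⟩
    · rw [Finset.singleton_subset_iff, Finset.mem_singleton] at hst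
      rw [hst]
    · rw [gb_vert]
      linarith [fc_vert_le v, gb_edge_ge hn hi hε1 jt]
    · exfalso
      have := Finset.card_le_card hst
      rw [edg_card, Finset.card_singleton] at this
      omega
    · have : edg n js = edg n jt :=
        Finset.eq_of_subset_of_card_le hst (by rw [edg_card, edg_card])
      rw [this]
  · intro s hs t ht hfe
    rcases faces_cases hs with ⟨v, rfl⟩ | ⟨js, rfl⟩ <;>
      rcases faces_cases ht with ⟨w, rfl⟩ | ⟨jt, rfl⟩
    · rw [gb_vert, gb_vert] at hfe
      exact (fc_filtration hn).2 _ (vert_mem v) _ (vert_mem w) hfe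
    · exfalso
      rw [gb_vert] at hfe
      linarith [fc_vert_le v, gb_edge_ge hn hi hε1 jt]
    · exfalso
      rw [gb_vert] at hfe
      linarith [fc_vert_le w, gb_edge_ge hn hi hε1 js]
    · by_cases h1 : js = Fin.last (n+1) <;> by_cases h2 : jt = Fin.last (n+1)
      · rw [h1, h2]
      · exfalso
        rw [h1, gb_top] at hfe
        by_cases h3 : jt = i
        · rw [h3, gb_i hn hi] at hfe
          linarith
        · linarith [(gb_other_bounds (ε := ε) hn h2 h3).2]
      · exfalso
        rw [h2, gb_top] at hfe
        by_cases h3 : js = i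
        · rw [h3, gb_i hn hi] at hfe
          linarith
        · linarith [(gb_other_bounds (ε := ε) hn h1 h3).2]
      · by_cases h3 : js = i <;> by_cases h4 : jt = i
        · rw [h3, h4]
        · exfalso
          rw [h3, gb_i hn hi] at hfe
          linarith [(gb_other_bounds (ε := ε) hn h2 h4).2]
        · exfalso
          rw [h4, gb_i hn hi] at hfe
          linarith [(gb_other_bounds (ε := ε) hn h1 h3).2]
        · rw [gb_other hn h1 h3, gb_other hn h2 h4] at hfe
          have : fc n (edg n js) = fc n (edg n jt) := by linarith
          exact (fc_filtration hn).2 _ (edg_mem js) _ (edg_mem jt) this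

lemma gb_dist (hn : 1 ≤ n) (hi : i.val ≤ n) (hε1 : 1 < ε) (hε2 : ε < 2) :
    DistLE (Kc n) (fc n) (gbig n i ε) ε := by
  intro s hs
  rcases faces_cases hs with ⟨v, rfl⟩ | ⟨j, rfl⟩
  · rw [gb_vert, sub_self, abs_zero]
    linarith
  · by_cases h1 : j = Fin.last (n+1)
    · rw [h1, gb_top, fc_edg_top hn, abs_le]
      constructor <;> linarith
    by_cases h2 : j = i
    · rw [h2, gb_i hn hi, fc_edg_reg hn hi, abs_le]
      have h3 : (0:ℝ) ≤ (n:ℝ) - i.val := by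
        have : (i.val : ℝ) ≤ (n:ℝ) := by exact_mod_cast hi
        linarith
      have h4 : ((n:ℝ) - i.val) * σv n ≤ 1/4 := by
        have h5 : (n:ℝ) - i.val ≤ (n:ℝ) + 2 := by
          linarith [Nat.cast_nonneg (α := ℝ) i.val]
        nlinarith [σv_pos (n := n), σv_bound (n := n)]
      have h6 : 0 ≤ ((n:ℝ) - i.val) * σv n := mul_nonneg h3 (σv_pos (n := n)).le
      constructor <;> linarith
    · rw [gb_other hn h1 h2, abs_le]
      have := fc_edg_reg_bounds hn (show j.val ≤ n by by_contra h; exact h1 (i_eq_last h))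
      constructor <;> linarith

lemma gb_terminal (hn : 1 ≤ n) (hi : i.val ≤ n) (hε1 : 1 < ε) :
    TerminalSimplex ℚ (Kc n) (gbig n i ε) 0 (αc n) (edg n i) := by
  refine ⟨edg_mem i, ?_, ?_⟩
  · rw [gb_i hn hi]
    apply (triv_iff hn _ _).mpr
    right
    intro k hk
    have hkv : ((k : Fin (n+2))).val ≤ n := by rw [val_natCast (by omega)]; omega
    by_cases h2 : (k : Fin (n+2)) = i
    · rw [h2, gb_i hn hi]
    · rw [gb_other hn (fun h => by rw [h, Fin.val_last] at hkv; omega) h2]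
      have := (fc_edg_reg_bounds hn hkv).2
      linarith
  · intro q hq htriv
    rw [gb_i hn hi] at hq
    rcases (triv_iff hn _ _).mp htriv with hA | hB
    · rw [gb_top] at hA
      linarith
    · have hB2 := hB i.val hi
      rw [Fin.cast_val_eq_self] at hB2
      rw [gb_i hn hi] at hB2
      linarith


lemma big_eps (hn : 1 ≤ n) {ε : ℝ} (hε1 : 1 < ε ) (hε2 : ε < 2) (i : Fin (n+2)) :
    edg n i ∈ TermSet ℚ (Kc n) (fc n) 0 (αc n) ε := by
  by_cases hi : i.val ≤ n
  · exact ⟨gbig n i ε, gb_filtration hn hi hε1 hε2, gb_dist hn hi hε1 hε2,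
      gb_terminal hn hi hε1⟩
  · rw [i_eq_last hi]
    exact ⟨fc n, fc_filtration hn, fun s _ => by rw [sub_self, abs_zero]; linarith,
      terminal_fc_top hn⟩

end S16


/-- Example `example6`: on a cycle graph with `n + 2`
vertices, `|Σ_ε|` can jump from `1` to `n + 2`. -/
theorem stmt16 :
    ∀ n : ℕ, 1 ≤ n →
      ∃ (K : SComplex (Fin (n + 2))) (f : Finset (Fin (n + 2)) → ℝ)
        (α : Finset (Fin (n + 2)) →₀ ℚ) (a b t₀ : ℝ),
        K.faces =
          (Finset.univ.image fun i : Fin (n + 2) => ({i} : Finset (Fin (n + 2)))) ∪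
          (Finset.univ.image fun i : Fin (n + 2) => ({i, i + 1} : Finset (Fin (n + 2)))) ∧
        IsInjFiltration K f ∧
        BornAt ℚ K f 0 α a ∧ TerminatesAt ℚ K f 0 α b ∧
        0 < t₀ ∧ t₀ < (b - a) / 2 ∧
        (∀ ε : ℝ, 0 < ε → ε ≤ t₀ → (TermSet ℚ K f 0 α ε).ncard = 1) ∧
        (∃ δ > 0, ∀ ε : ℝ, t₀ < ε → ε < t₀ + δ →
          ε < (b - a) / 2 ∧ n + 2 ≤ (TermSet ℚ K f 0 α ε).ncard) := by
  intro n hn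
  have ha : ((n + 1 : ℕ) : ℝ) * S16.σv n ≤ 1/4 := by
    have h1 : ((n + 1 : ℕ) : ℝ) ≤ (n : ℝ) + 2 := by push_cast; linarith
    nlinarith [S16.σv_pos (n := n), S16.σv_bound (n := n)]
  have ha0 : 0 ≤ ((n + 1 : ℕ) : ℝ) * S16.σv n := by
    have := S16.σv_pos (n := n)
    positivity
  refine ⟨S16.Kc n, S16.fc n, S16.αc n, ((n + 1 : ℕ) : ℝ) * S16.σv n, 10, 1,
    rfl, S16.fc_filtration hn, S16.born_fc hn, S16.terminates_fc hn, one_pos, by linarith,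
    ?_, ?_⟩
  · intro ε h0 h1
    rw [S16.small_eps hn h0 h1]
    exact Set.ncard_singleton _
  · refine ⟨1, one_pos, ?_⟩
    intro ε hε1 hε2
    have hε2' : ε < 2 := by linarith
    constructor
    · linarith
    · have hsub : Set.range (S16.edg n) ⊆ TermSet ℚ (S16.Kc n) (S16.fc n) 0 (S16.αc n) ε := by
        rintro _ ⟨i, rfl⟩
        exact S16.big_eps hn hε1 hε2' i
      have hfin : (TermSet ℚ (S16.Kc n) (S16.fc n) 0 (S16.αc n) ε).Finite := by
        apply Set.Finite.subset (S16.Kc n).faces.finite_toSet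
        intro Δ hΔ
        obtain ⟨g, -, -, hT⟩ := hΔ
        exact hT.1
      have hrange : (Set.range (S16.edg n)).ncard = n + 2 := by
        rw [← Set.image_univ, Set.ncard_image_of_injective _ (fun a b h => S16.edg_inj hn h),
          Set.ncard_univ, Nat.card_eq_fintype_card, Fintype.card_fin]
      calc n + 2 = (Set.range (S16.edg n)).ncard := hrange.symm
        _ ≤ _ := Set.ncard_le_ncard hsub hfin
end
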